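/- arXiv:2112.07897 — 8 statements merged into one kernel-verified Lean document; each statement's English description precedes it below -/
import Mathlib

section
/- For all integers n ≥ k ≥ 1, every graph G on n vertices that is uniquely k-colorable has at least (k−1)·n − k(k−1)/2 edges. -/
open Finset

/-- The bipartite subgraph of `G` consisting of edges whose endpoints get colors `i` and `j`. -/
private def bipSub {n k : ℕ} (G : SimpleGraph (Fin n)) (χ : Fin n → Fin k) (i j : Fin k) :
    SimpleGraph (Fin n) where
  Adj a b := G.Adj a b ∧ ((χ a = i ∧ χ b = j) ∨ (χ a = j ∧ χ b = i))
  symm := ⟨by intro a b ⟨h1, h2⟩; exact ⟨h1.symm, by tauto⟩⟩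
  loopless := ⟨fun a h => G.loopless.irrefl a h.1⟩

private lemma bip_reachable {n k : ℕ} (G : SimpleGraph (Fin n))
    (χ : G.Coloring (Fin k))
    (huniq : ∀ (χ₁ χ₂ : G.Coloring (Fin k)) (u v : Fin n), χ₁ u = χ₁ v ↔ χ₂ u = χ₂ v)
    (i j : Fin k) (hij : i ≠ j) (u v : Fin n)
    (hu : χ u = i ∨ χ u = j) (hv : χ v = i ∨ χ v = j) :
    (bipSub G χ i j).Reachable u v := by
  classical
  by_contra hne
  set H := bipSub G χ i j with hH
  set σ := Equiv.swap i j with hσ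
  set f : Fin n → Fin k := fun w => if H.Reachable u w then σ (χ w) else χ w with hf
  have valid : ∀ ⦃a b : Fin n⦄, G.Adj a b → f a ≠ f b := by
    intro a b hab hfe
    have hcol : χ a ≠ χ b := χ.valid hab
    by_cases ra : H.Reachable u a <;> by_cases rb : H.Reachable u b
    · simp only [hf, ra, rb, if_pos] at hfe
      exact hcol (σ.injective hfe)
    · simp only [hf, ra, rb, if_pos, if_neg, not_false_iff] at hfe
      -- σ (χ a) = χ b
      rcases eq_or_ne (χ a) i with hai | hai
      · rw [hai, Equiv.swap_apply_left] at hfe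
        exact rb (ra.trans (SimpleGraph.Adj.reachable (G := H) (show G.Adj a b ∧ ((χ a = i ∧ χ b = j) ∨ (χ a = j ∧ χ b = i)) from ⟨hab, Or.inl ⟨hai, hfe.symm⟩⟩)))
      rcases eq_or_ne (χ a) j with haj | haj
      · rw [haj, Equiv.swap_apply_right] at hfe
        exact rb (ra.trans (SimpleGraph.Adj.reachable (G := H) (show G.Adj a b ∧ ((χ a = i ∧ χ b = j) ∨ (χ a = j ∧ χ b = i)) from ⟨hab, Or.inr ⟨haj, hfe.symm⟩⟩)))
      · rw [Equiv.swap_apply_of_ne_of_ne hai haj] at hfe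
        exact hcol hfe
    · simp only [hf, ra, rb, if_pos, if_neg, not_false_iff] at hfe
      -- χ a = σ (χ b)
      rcases eq_or_ne (χ b) i with hbi | hbi
      · rw [hbi, Equiv.swap_apply_left] at hfe
        exact ra (rb.trans (SimpleGraph.Adj.reachable
          (H.adj_symm (show G.Adj a b ∧ ((χ a = i ∧ χ b = j) ∨ (χ a = j ∧ χ b = i)) from ⟨hab, Or.inr ⟨hfe, hbi⟩⟩))))
      rcases eq_or_ne (χ b) j with hbj | hbj
      · rw [hbj, Equiv.swap_apply_right] at hfe
        exact ra (rb.trans (SimpleGraph.Adj.reachable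
          (H.adj_symm (show G.Adj a b ∧ ((χ a = i ∧ χ b = j) ∨ (χ a = j ∧ χ b = i)) from ⟨hab, Or.inl ⟨hfe, hbj⟩⟩))))
      · rw [Equiv.swap_apply_of_ne_of_ne hbi hbj] at hfe
        exact hcol hfe
    · simp only [hf, ra, rb, if_neg, not_false_iff] at hfe
      exact hcol hfe
  let χ' : G.Coloring (Fin k) := SimpleGraph.Coloring.mk f (fun {a b} hab => valid hab)
  have h1 := huniq χ χ' u v
  have hfu : χ' u = σ (χ u) := by
    show f u = σ (χ u)
    simp [hf, SimpleGraph.Reachable.refl]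
  have hfv : χ' v = χ v := by
    show f v = χ v
    simp [hf, hne]
  have hswap_ne : σ (χ u) ≠ χ u := by
    rcases hu with h | h <;> rw [h]
    · rw [Equiv.swap_apply_left]; exact hij.symm
    · rw [Equiv.swap_apply_right]; exact hij
  rcases eq_or_ne (χ u) (χ v) with heq | hneq
  · have := h1.mp heq
    rw [hfu, hfv, ← heq] at this
    exact hswap_ne this
  · have hsw : σ (χ u) = χ v := by
      rcases hu with h | h <;> rcases hv with h' | h'
      · exact absurd (h.trans h'.symm) hneq
      · rw [h, h', Equiv.swap_apply_left]
      · rw [h, h', Equiv.swap_apply_right]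
      · exact absurd (h.trans h'.symm) hneq
    have : χ' u = χ' v := by rw [hfu, hfv, hsw]
    exact hneq (h1.mpr this)

/-- For all integers `n ≥ k ≥ 1`, every graph `G` on `n` vertices that is uniquely
`k`-colorable (it admits a proper `k`-coloring using all `k` colors, and any two proper
`k`-colorings induce the same partition of the vertices into color classes) has at least
`(k-1)·n - k(k-1)/2` edges. -/
theorem uniquely_colorable_edge_lower_bound (n k : ℕ) (hk : 1 ≤ k) (hkn : k ≤ n)
    (G : SimpleGraph (Fin n)) [DecidableRel G.Adj]
    (χ : G.Coloring (Fin k)) (hsurj : Function.Surjective χ)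
    (huniq : ∀ (χ₁ χ₂ : G.Coloring (Fin k)) (u v : Fin n), χ₁ u = χ₁ v ↔ χ₂ u = χ₂ v) :
    ((k : ℤ) - 1) * n - k * (k - 1) / 2 ≤ (G.edgeFinset.card : ℤ) := by
  classical
  -- color classes
  set cc : Fin k → Finset (Fin n) := fun c => univ.filter (fun v => χ v = c) with hcc
  set N : Fin k → ℤ := fun c => ((cc c).card : ℤ) with hN
  -- the fiber map: each edge goes to its sorted pair of colors
  set F : Sym2 (Fin n) → Fin k × Fin k :=
    Sym2.lift ⟨fun a b => if χ a ≤ χ b then (χ a, χ b) else (χ b, χ a), by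
      intro a b
      dsimp only
      rcases le_or_gt (χ a) (χ b) with h1 | h1 <;> rcases le_or_gt (χ b) (χ a) with h2 | h2
      · simp [h1, h2, le_antisymm h1 h2]
      · simp [h1, not_le.mpr h2]
      · simp [h2, not_le.mpr h1]
      · exact absurd (le_of_lt h1) (not_le.mpr h2)⟩ with hF
  have hEdecomp : G.edgeFinset.card =
      ∑ q ∈ (univ : Finset (Fin k × Fin k)),
        (G.edgeFinset.filter (fun e => F e = q)).card :=
    card_eq_sum_card_fiberwise (fun e _ => mem_univ _)
  -- fiber lower bound
  have fib : ∀ i j : Fin k, i < j →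
      (cc i).card + (cc j).card ≤
        (G.edgeFinset.filter (fun e => F e = (i, j))).card + 1 := by
    intro i j hij
    set H := bipSub G χ i j with hH
    obtain ⟨u, hu⟩ := hsurj i
    set S : Finset (Fin n) := univ.filter (fun v => χ v = i ∨ χ v = j) with hS
    have hScard : S.card = (cc i).card + (cc j).card := by
      rw [hS, hcc, filter_or]
      exact card_union_of_disjoint (by
        simp only [disjoint_filter]
        intro x _ hx
        rw [hx]
        exact fun h => (ne_of_lt hij) h)
    have huS : u ∈ S := by simp [hS, hu]
    -- the "parent edge" map
    have hex : ∀ v ∈ S.erase u, ∃ w, H.Adj v w ∧ H.dist w u < H.dist v u := by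
      intro v hv
      obtain ⟨hvne, hvS⟩ := mem_erase.mp hv
      have hvcol : χ v = i ∨ χ v = j := by simpa [hS] using hvS
      have hreach : H.Reachable v u :=
        bip_reachable G χ huniq i j (ne_of_lt hij) v u hvcol (Or.inl hu)
      obtain ⟨p, hp⟩ := hreach.exists_walk_length_eq_dist
      have hdpos : 0 < H.dist v u := hreach.pos_dist_of_ne hvne
      cases p with
      | nil => rw [← hp] at hdpos; simp at hdpos
      | cons h q =>
        refine ⟨_, h, ?_⟩
        have : H.dist _ u ≤ q.length := SimpleGraph.dist_le q
        rw [SimpleGraph.Walk.length_cons] at hp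
        omega
    set pr : Fin n → Fin n := fun v =>
      if h : ∃ w, H.Adj v w ∧ H.dist w u < H.dist v u then Classical.choose h else v with hpr
    have hkey : ∀ v ∈ S.erase u, H.Adj v (pr v) ∧ H.dist (pr v) u < H.dist v u := by
      intro v hv
      have h := hex v hv
      rw [hpr]
      simp only [dif_pos h]
      exact Classical.choose_spec h
    have hcard : (S.erase u).card ≤
        (G.edgeFinset.filter (fun e => F e = (i, j))).card := by
      apply Finset.card_le_card_of_injOn (fun v => s(v, pr v))
      · intro v hv
        obtain ⟨hadj, _⟩ := hkey v hv
        rw [Finset.mem_coe, mem_filter, SimpleGraph.mem_edgeFinset]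
        refine ⟨hadj.1, ?_⟩
        rw [hF]
        rcases hadj.2 with ⟨h1, h2⟩ | ⟨h1, h2⟩
        · simp [Sym2.lift_mk, h1, h2, le_of_lt hij]
        · simp [Sym2.lift_mk, h1, h2, not_le.mpr hij]
      · intro v1 hv1 v2 hv2 heq
        simp only [Sym2.eq_iff] at heq
        rcases heq with ⟨h, _⟩ | ⟨h1, h2⟩
        · exact h
        · exfalso
          obtain ⟨_, hd1⟩ := hkey v1 hv1
          obtain ⟨_, hd2⟩ := hkey v2 hv2
          rw [h2] at hd1
          rw [← h1] at hd2
          exact absurd (hd1.trans hd2) (lt_irrefl _)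
    rw [← hScard]
    have := Finset.card_erase_of_mem huS
    omega
  -- sum over sorted pairs
  set P : Finset (Fin k × Fin k) := univ.filter (fun q => q.1 < q.2) with hP
  have hEbound : (∑ q ∈ P, (N q.1 + N q.2 - 1)) ≤ (G.edgeFinset.card : ℤ) := by
    calc (∑ q ∈ P, (N q.1 + N q.2 - 1))
        ≤ ∑ q ∈ P, ((G.edgeFinset.filter (fun e => F e = q)).card : ℤ) := by
          apply Finset.sum_le_sum
          intro q hq
          have hq' : q.1 < q.2 := (mem_filter.mp hq).2
          have := fib q.1 q.2 hq'
          rw [hN]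
          push_cast
          rw [show ((q.1 : Fin k), (q.2 : Fin k)) = q from rfl] at this
          push_cast at this ⊢
          linarith
      _ ≤ ∑ q ∈ (univ : Finset (Fin k × Fin k)),
            ((G.edgeFinset.filter (fun e => F e = q)).card : ℤ) := by
          apply Finset.sum_le_sum_of_subset_of_nonneg (filter_subset _ _)
          intro q _ _
          positivity
      _ = (G.edgeFinset.card : ℤ) := by rw [hEdecomp]; push_cast; ring
  -- arithmetic: compute the sum over sorted pairs
  have hsumN : ∑ c, N c = (n : ℤ) := by
    have : (univ : Finset (Fin n)).card = ∑ c, (cc c).card :=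
      card_eq_sum_card_fiberwise (fun v _ => mem_univ (χ v))
    rw [hN]
    push_cast
    rw [← Nat.cast_sum]
    rw [Finset.card_univ, Fintype.card_fin] at this
    exact_mod_cast this.symm
  set g : Fin k × Fin k → ℤ := fun q => N q.1 + N q.2 - 1 with hg
  have hswapsum : ∑ q ∈ P, g q = ∑ q ∈ univ.filter (fun q : Fin k × Fin k => q.2 < q.1), g q := by
    apply Finset.sum_nbij' (fun q => (q.2, q.1)) (fun q => (q.2, q.1)) <;>
      simp [hg, hP, Finset.mem_filter] <;> intros <;> ring
  have hoffdiag : ∑ q ∈ (univ : Finset (Fin k)).offDiag, g q = 2 * (∑ q ∈ P, g q) := by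
    have hsplit : (univ : Finset (Fin k)).offDiag =
        P ∪ univ.filter (fun q : Fin k × Fin k => q.2 < q.1) := by
      rw [hP, ← filter_or]
      ext q
      simp only [Finset.mem_offDiag, mem_filter, mem_univ, true_and]
      exact ne_iff_lt_or_gt
    rw [hsplit, Finset.sum_union, ← hswapsum]
    · ring
    · rw [hP]
      simp only [Finset.disjoint_filter]
      intro q _ h1 h2
      exact absurd (h1.trans h2) (lt_irrefl _)
  have hoffval : ∑ q ∈ (univ : Finset (Fin k)).offDiag, g q =
      2 * ((k : ℤ) - 1) * n - k * (k - 1) := by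
    have hfull : ∑ q ∈ (univ : Finset (Fin k)) ×ˢ univ, g q =
        (∑ q ∈ (univ : Finset (Fin k)).offDiag, g q) + ∑ c : Fin k, g (c, c) := by
      rw [← Finset.diag_union_offDiag, Finset.sum_union (Finset.disjoint_diag_offDiag _),
        Finset.sum_diag]
      ring
    have hprod : ∑ q ∈ (univ : Finset (Fin k)) ×ˢ univ, g q =
        2 * (k : ℤ) * n - k * k := by
      rw [Finset.sum_product]
      simp only [hg]
      have : ∀ x : Fin k, ∑ y : Fin k, (N x + N y - 1) = k * N x + n - k := by
        intro x
        rw [Finset.sum_sub_distrib, Finset.sum_add_distrib, Finset.sum_const, Finset.sum_const,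
          hsumN, Finset.card_univ, Fintype.card_fin]
        push_cast
        ring
      rw [Finset.sum_congr rfl (fun x _ => this x), Finset.sum_sub_distrib,
        Finset.sum_add_distrib, ← Finset.mul_sum, hsumN, Finset.sum_const, Finset.sum_const,
        Finset.card_univ, Fintype.card_fin]
      push_cast
      ring
    have hdiag : ∑ c : Fin k, g (c, c) = 2 * (n : ℤ) - k := by
      have hpt : ∀ c : Fin k, g (c, c) = 2 * N c - 1 := fun c => by simp only [hg]; ring
      rw [Finset.sum_congr rfl fun c _ => hpt c, Finset.sum_sub_distrib, ← Finset.mul_sum,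
        hsumN, Finset.sum_const, Finset.card_univ, Fintype.card_fin]
      push_cast
      ring
    have := hfull
    rw [hprod, hdiag] at this
    linarith
  -- finish
  have h2div : 2 * ((k : ℤ) * (k - 1) / 2) = (k : ℤ) * (k - 1) := by
    apply Int.mul_ediv_cancel'
    have : Even (((k : ℤ) - 1) * ((k - 1) + 1)) := Int.even_mul_succ_self _
    rw [show ((k : ℤ) - 1) + 1 = k by ring] at this
    obtain ⟨m, hm⟩ := this
    exact ⟨m, by linarith⟩
  have hsumP : ∑ q ∈ P, g q = ((k : ℤ) - 1) * n - k * (k - 1) / 2 := by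
    have := hoffdiag
    rw [hoffval] at this
    linarith [h2div]
  calc ((k : ℤ) - 1) * n - k * (k - 1) / 2 = ∑ q ∈ P, g q := hsumP.symm
    _ ≤ (G.edgeFinset.card : ℤ) := hEbound
end

section
/- Let k ≥ 2, let G be a uniquely k-colorable graph, let χ be a proper k-coloring of G using all k colors, and let I₁, …, I_k be its color classes. Then for every pair of distinct indices i ≠ j, the subgraph of G induced on the vertex set I_i ∪ I_j is connected. -/
/-- If `G` is uniquely `k`-colorable (`k ≥ 2`) with surjective proper `k`-coloring `χ`,
then for any two distinct colors `i ≠ j`, the subgraph of `G` induced on the union of the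
color classes `χ⁻¹(i) ∪ χ⁻¹(j)` is connected. -/
theorem uniquely_colorable_pair_classes_connected {V : Type*} [Fintype V] (k : ℕ) (hk : 2 ≤ k)
    (G : SimpleGraph V)
    (χ : G.Coloring (Fin k)) (hsurj : Function.Surjective χ)
    (huniq : ∀ (χ₁ χ₂ : G.Coloring (Fin k)) (u v : V), χ₁ u = χ₁ v ↔ χ₂ u = χ₂ v)
    (i j : Fin k) (hij : i ≠ j) :
    (G.induce (⇑χ ⁻¹' {i} ∪ ⇑χ ⁻¹' {j})).Connected := by
  classical
  set S : Set V := (⇑χ ⁻¹' {i} ∪ ⇑χ ⁻¹' {j}) with hSdef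
  set H : SimpleGraph S := G.induce S with hHdef
  obtain ⟨u0, hu0⟩ := hsurj i
  have hu0S : u0 ∈ S := Or.inl hu0
  have hmem : ∀ {w : V}, w ∈ S ↔ χ w = i ∨ χ w = j := by
    intro w; simp [hSdef]
  rw [SimpleGraph.connected_iff]
  constructor
  · -- Preconnected
    rintro ⟨u, hu⟩ ⟨v, hv⟩
    by_contra hnr
    -- define a new coloring swapping i,j on the component of u
    set f : V → Fin k := fun w =>
      if h : ∃ hw : w ∈ S, H.Reachable ⟨u, hu⟩ ⟨w, hw⟩ then Equiv.swap i j (χ w)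
      else χ w with hf
    have hswapmem : ∀ {c : Fin k}, c = i ∨ c = j → Equiv.swap i j c = i ∨ Equiv.swap i j c = j := by
      rintro c (rfl | rfl)
      · right; simp
      · left; simp
    have hvalid : ∀ {a b : V}, G.Adj a b → f a ≠ f b := by
      have key : ∀ {a b : V}, G.Adj a b →
          (∃ hw : a ∈ S, H.Reachable ⟨u, hu⟩ ⟨a, hw⟩) →
          ¬ (∃ hw : b ∈ S, H.Reachable ⟨u, hu⟩ ⟨b, hw⟩) →
          Equiv.swap i j (χ a) ≠ χ b := by
        rintro a b hab ⟨haS, hra⟩ hb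
        have hbS : b ∉ S := by
          intro hbS
          exact hb ⟨hbS, hra.trans (SimpleGraph.Adj.reachable (by
            show G.Adj a b
            exact hab))⟩
        have hbc : ¬ (χ b = i ∨ χ b = j) := fun h => hbS (hmem.mpr h)
        have hac : χ a = i ∨ χ a = j := hmem.mp haS
        rcases hswapmem hac with h | h <;> intro hEq <;> exact hbc (by rw [← hEq]; tauto)
      intro a b hab
      simp only [hf]
      by_cases ha : ∃ hw : a ∈ S, H.Reachable ⟨u, hu⟩ ⟨a, hw⟩ <;>
        by_cases hb : ∃ hw : b ∈ S, H.Reachable ⟨u, hu⟩ ⟨b, hw⟩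
      · simp only [dif_pos ha, dif_pos hb]
        exact fun h => χ.valid hab ((Equiv.swap i j).injective h)
      · simp only [dif_pos ha, dif_neg hb]
        exact key hab ha hb
      · simp only [dif_neg ha, dif_pos hb]
        exact fun h => key hab.symm hb ha h.symm
      · simp only [dif_neg ha, dif_neg hb]
        exact χ.valid hab
    set χ₂ : G.Coloring (Fin k) := SimpleGraph.Coloring.mk f (fun hab => hvalid hab) with hχ₂
    have hfu : f u = Equiv.swap i j (χ u) := dif_pos ⟨hu, SimpleGraph.Reachable.refl _⟩
    have hfv : f v = χ v := by
      apply dif_neg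
      rintro ⟨hw, h⟩
      exact hnr h
    have hχ₂app : ∀ w, χ₂ w = f w := fun _ => rfl
    have huc : χ u = i ∨ χ u = j := hmem.mp hu
    have hvc : χ v = i ∨ χ v = j := hmem.mp hv
    by_cases hcv : χ u = χ v
    · have h2 : χ₂ u = χ₂ v := (huniq χ χ₂ u v).mp hcv
      rw [hχ₂app, hχ₂app, hfu, hfv, ← hcv] at h2
      rcases huc with h | h <;> rw [h] at h2 <;> simp at h2 <;> exact hij (by tauto)
    · have h2 : χ₂ u = χ₂ v := by
        rw [hχ₂app, hχ₂app, hfu, hfv]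
        rcases huc with h | h <;> rcases hvc with h' | h' <;>
          first
            | exact absurd (h.trans h'.symm) hcv
            | simp [h, h']
      exact hcv ((huniq χ χ₂ u v).mpr h2)
  · exact ⟨⟨u0, hu0S⟩⟩
end

section
/- Every uniquely k-colorable graph with k ≥ 2 is connected. -/
/-- Every uniquely `k`-colorable graph with `k ≥ 2` is connected. -/
theorem uniquely_colorable_connected {V : Type*} [Fintype V] (k : ℕ) (hk : 2 ≤ k)
    (G : SimpleGraph V)
    (χ : G.Coloring (Fin k)) (hsurj : Function.Surjective χ)
    (huniq : ∀ (χ₁ χ₂ : G.Coloring (Fin k)) (u v : V), χ₁ u = χ₁ v ↔ χ₂ u = χ₂ v) :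
    G.Connected := by
  classical
  have hk0 : 0 < k := by omega
  haveI : NeZero k := ⟨by omega⟩
  have hk1 : (1 : Fin k) ≠ 0 := by
    simp [Fin.ext_iff, Fin.val_one, Nat.mod_eq_of_lt (show 1 < k by omega)]
  rw [SimpleGraph.connected_iff]
  refine ⟨?_, ?_⟩
  · intro u v
    by_contra hR
    set d : Fin k := if χ u = χ v then 1 else χ v - χ u with hd
    have hd0 : d ≠ 0 := by
      rcases eq_or_ne (χ u) (χ v) with h | h
      · simpa [hd, h] using hk1
      · simp only [hd, if_neg h]
        exact fun he => h (sub_eq_zero.mp he).symm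
    let f : V → Fin k := fun x => if G.Reachable u x then χ x + d else χ x
    have hvalid : ∀ {x y : V}, G.Adj x y → f x ≠ f y := by
      intro x y hxy
      have hcomp : G.Reachable u x ↔ G.Reachable u y :=
        ⟨fun h => h.trans hxy.reachable, fun h => h.trans hxy.symm.reachable⟩
      have hne := χ.valid hxy
      by_cases h : G.Reachable u x
      · simp only [f, if_pos h, if_pos (hcomp.mp h)]
        exact fun he => hne (add_right_cancel he)
      · simp only [f, if_neg h, if_neg (fun h' => h (hcomp.mpr h'))]
        exact hne
    let χ₂ : G.Coloring (Fin k) := SimpleGraph.Coloring.mk f fun hxy => hvalid hxy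
    have hu : χ₂ u = χ u + d := if_pos (SimpleGraph.Reachable.refl u)
    have hv : χ₂ v = χ v := if_neg hR
    have key := huniq χ χ₂ u v
    rcases eq_or_ne (χ u) (χ v) with h | h
    · have h2 : χ₂ u = χ₂ v := key.mp h
      rw [hu, hv, ← h] at h2
      exact hd0 (by simpa using h2.symm)
    · have h2 : χ₂ u ≠ χ₂ v := fun he => h (key.mpr he)
      apply h2
      rw [hu, hv, hd, if_neg h]
      exact add_sub_cancel _ _
  · obtain ⟨v, -⟩ := hsurj 0
    exact ⟨v⟩
end

section
/- If G is a uniquely k-colorable graph with k ≥ 2, then every vertex of G has degree at least k − 1. -/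
/-- If `G` is uniquely `k`-colorable with `k ≥ 2`, then every vertex of `G` has degree
at least `k - 1`. -/
theorem uniquely_colorable_min_degree {V : Type*} [Fintype V] (k : ℕ) (hk : 2 ≤ k)
    (G : SimpleGraph V) [DecidableRel G.Adj]
    (χ : G.Coloring (Fin k)) (hsurj : Function.Surjective χ)
    (huniq : ∀ (χ₁ χ₂ : G.Coloring (Fin k)) (u v : V), χ₁ u = χ₁ v ↔ χ₂ u = χ₂ v) :
    ∀ v : V, k - 1 ≤ G.degree v := by
  classical
  intro v
  by_contra hdeg
  push_neg at hdeg
  set S : Finset (Fin k) := insert (χ v) ((G.neighborFinset v).image χ) with hS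
  have hScard : S.card < k := by
    calc S.card ≤ ((G.neighborFinset v).image χ).card + 1 := Finset.card_insert_le _ _
    _ ≤ G.degree v + 1 := Nat.add_le_add_right Finset.card_image_le 1
    _ < k := by omega
  obtain ⟨c, hc⟩ : ∃ c : Fin k, c ∉ S := by
    by_contra h
    push_neg at h
    have : S = Finset.univ := Finset.eq_univ_of_forall h
    rw [this] at hScard
    simp at hScard
  have hcv : c ≠ χ v := fun h => hc (by simp [hS, h])
  have hcn : ∀ u, G.Adj v u → χ u ≠ c := by
    intro u hu h
    refine hc ?_
    rw [hS]
    refine Finset.mem_insert_of_mem ?_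
    exact Finset.mem_image.mpr ⟨u, by simpa using hu, h⟩
  let χ' : G.Coloring (Fin k) := SimpleGraph.Coloring.mk (Function.update χ v c) (by
    intro a b hab
    by_cases ha : a = v
    · have hb : b ≠ v := fun h => G.ne_of_adj hab (ha.trans h.symm)
      rw [ha, Function.update_self, Function.update_of_ne hb]
      exact fun h => hcn b (ha ▸ hab) h.symm
    · by_cases hb : b = v
      · rw [hb, Function.update_self, Function.update_of_ne ha]
        exact fun h => hcn a (hb ▸ hab.symm) h
      · rw [Function.update_of_ne ha, Function.update_of_ne hb]
        exact χ.valid hab)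
  obtain ⟨u, hu⟩ := hsurj c
  have huv : u ≠ v := fun h => hcv (h ▸ hu).symm
  have h1 : χ' u = χ' v := by
    show Function.update χ v c u = Function.update χ v c v
    rw [Function.update_of_ne huv, Function.update_self, hu]
  have h2 : χ u = χ v := (huniq χ χ' u v).mpr h1
  exact hcv (hu ▸ h2)
end

section
/- For all integers n ≥ k ≥ 1, there exists a membership-query decision tree on vertex set V = Fin n that learns the family of all partitions of V into exactly k nonempty blocks and makes at most (k−1)·n − k(k−1)/2 queries on every partition in this family. -/
/-- A membership-query decision tree on vertex set `Fin n`: each internal node is labeled by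
an unordered pair of distinct vertices (a membership query), each leaf by a partition of
`Fin n`. -/
inductive MTree (n : ℕ) : Type where
  | leaf : Finpartition (Finset.univ : Finset (Fin n)) → MTree n
  | node : (u v : Fin n) → u ≠ v → MTree n → MTree n → MTree n

/-- `u` and `v` lie in the same block of the partition `P`. -/
def sameBlock {n : ℕ} (P : Finpartition (Finset.univ : Finset (Fin n))) (u v : Fin n) : Prop :=
  ∃ b ∈ P.parts, u ∈ b ∧ v ∈ b

instance {n : ℕ} (P : Finpartition (Finset.univ : Finset (Fin n))) (u v : Fin n) :
    Decidable (sameBlock P u v) := by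
  unfold sameBlock; infer_instance

/-- The leaf reached by executing the tree on hidden partition `P`. -/
def MTree.run {n : ℕ} :
    MTree n → Finpartition (Finset.univ : Finset (Fin n)) →
      Finpartition (Finset.univ : Finset (Fin n))
  | .leaf Q, _ => Q
  | .node u v _ tyes tno, P => if sameBlock P u v then tyes.run P else tno.run P

/-- The number of queries made on hidden partition `P`. -/
def MTree.queries {n : ℕ} : MTree n → Finpartition (Finset.univ : Finset (Fin n)) → ℕ
  | .leaf _, _ => 0
  | .node u v _ tyes tno, P =>
      1 + (if sameBlock P u v then tyes.queries P else tno.queries P)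


open Finset

lemma sameBlock_iff {n : ℕ} (P : Finpartition (Finset.univ : Finset (Fin n))) (x y : Fin n) :
    sameBlock P x y ↔ P.part x = P.part y := by
  constructor
  · rintro ⟨b, hb, hx, hy⟩
    rw [P.part_eq_of_mem hb hx, P.part_eq_of_mem hb hy]
  · intro h
    exact ⟨P.part x, P.part_mem.2 (mem_univ x), P.mem_part (mem_univ x),
      h ▸ P.mem_part (mem_univ y)⟩

lemma sb_refl {n : ℕ} (P : Finpartition (Finset.univ : Finset (Fin n))) (x : Fin n) :
    sameBlock P x x := (sameBlock_iff P x x).2 rfl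

lemma part_ext {n : ℕ} (P Q : Finpartition (Finset.univ : Finset (Fin n)))
    (h : ∀ a, P.part a = Q.part a) : P = Q := by
  apply Finpartition.ext
  ext b
  constructor
  · intro hb
    obtain ⟨x, hx⟩ := P.nonempty_of_mem_parts hb
    rw [← P.part_eq_of_mem hb hx, h]
    exact Q.part_mem.2 (mem_univ x)
  · intro hb
    obtain ⟨x, hx⟩ := Q.nonempty_of_mem_parts hb
    rw [← Q.part_eq_of_mem hb hx, ← h]
    exact P.part_mem.2 (mem_univ x)

instance kerDec {n : ℕ} (f : Fin n → Fin n) : DecidableRel (Setoid.ker f).r :=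
  fun a b => decidable_of_iff (f a = f b) Iff.rfl

lemma leaf_eq {n : ℕ} (P : Finpartition (Finset.univ : Finset (Fin n))) (f : Fin n → Fin n)
    (h : ∀ x y : Fin n, sameBlock P x y ↔ f x = f y) :
    Finpartition.ofSetoid (Setoid.ker f) = P := by
  apply part_ext
  intro a
  ext y
  rw [Finpartition.mem_part_ofSetoid_iff_rel]
  show f a = f y ↔ _
  rw [← h]
  rw [sameBlock_iff]
  constructor
  · intro hh
    exact hh ▸ P.mem_part (mem_univ y)
  · intro hh
    exact (P.part_eq_of_mem (P.part_mem.2 (mem_univ a)) hh).symm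

def buildT (n k : ℕ) (f : Fin n → Fin n) (reps : List (Fin n)) : List (Fin n) → MTree n
  | [] => .leaf (Finpartition.ofSetoid (Setoid.ker f))
  | v :: rest =>
      (if reps.length = k then reps.dropLast else reps).foldr
        (fun r acc => if h : v = r then acc
          else .node v r h (buildT n k (Function.update f v r) reps rest) acc)
        (if reps.length = k then
           buildT n k (Function.update f v (reps.getLastD v)) reps rest
         else buildT n k f (reps ++ [v]) rest)

def qb (k : ℕ) : ℕ → ℕ → ℕ
  | _, 0 => 0
  | m, j+1 => min m (k-1) + qb k (m+1) j

lemma qb_mono (k : ℕ) : ∀ (j m : ℕ), qb k m j ≤ qb k (m+1) j := by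
  intro j
  induction j with
  | zero => intro m; simp [qb]
  | succ j ih =>
    intro m
    simp only [qb]
    have := ih (m+1)
    have : min m (k-1) ≤ min (m+1) (k-1) := by omega
    omega

lemma qb_eq (k : ℕ) : ∀ (j m : ℕ), k - 1 ≤ m → qb k m j = (k-1) * j := by
  intro j
  induction j with
  | zero => intro m _; simp [qb]
  | succ j ih =>
    intro m hm
    simp only [qb, ih (m+1) (by omega)]
    have : min m (k-1) = k - 1 := by omega
    rw [this]; ring

lemma qb_bound (k : ℕ) (hk : 1 ≤ k) : ∀ (j m : ℕ), k ≤ m + j + 1 → m ≤ k →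
    2 * (qb k m j : ℤ) + ((k:ℤ) - m) * ((k:ℤ) - 1 - m) ≤ 2 * (((k:ℤ) - 1) * j) := by
  intro j
  induction j with
  | zero =>
    intro m hm hmk
    have h1 : (m:ℤ) ≥ (k:ℤ) - 1 := by omega
    have h2 : ((k:ℤ) - m) ≥ 0 := by omega
    simp only [qb, Nat.cast_zero, Nat.cast_ofNat]
    nlinarith
  | succ j ih =>
    intro m hm hmk
    by_cases hc : k - 1 ≤ m
    · rw [qb_eq k (j+1) m hc]
      have h1 : (m:ℤ) ≥ (k:ℤ) - 1 := by omega
      have h2 : ((k:ℤ) - m) ≥ 0 := by omega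
      have h3 : (((k-1) * (j+1) : ℕ) : ℤ) = ((k:ℤ) - 1) * ((j:ℤ)+1) := by
        push_cast [Nat.cast_sub hk]; ring
      rw [h3]
      push_cast
      nlinarith
    · have hmin : min m (k-1) = m := by omega
      simp only [qb, hmin]
      have hih := ih (m+1) (by omega) (by omega)
      push_cast at hih ⊢
      nlinarith [hih]

lemma foldr_spec {n : ℕ} (P : Finpartition (Finset.univ : Finset (Fin n))) (v : Fin n)
    (yes : Fin n → MTree n) (base : MTree n) (C : ℕ) (reps : List (Fin n))
    (hv : ∀ r ∈ reps, v ≠ r)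
    (hyes : ∀ r ∈ reps, sameBlock P v r → (yes r).run P = P ∧ (yes r).queries P ≤ C) :
    ∀ qs : List (Fin n), (∀ r ∈ qs, r ∈ reps) →
      ((∀ r ∈ qs, ¬ sameBlock P v r) → base.run P = P ∧ base.queries P ≤ C) →
      ((qs.foldr (fun r acc => if h : v = r then acc else .node v r h (yes r) acc) base).run P = P ∧
       (qs.foldr (fun r acc => if h : v = r then acc else .node v r h (yes r) acc) base).queries P
         ≤ qs.length + C) := by
  intro qs
  induction qs with
  | nil =>
    intro _ hbase
    simpa using hbase (by simp)
  | cons r qs ih =>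
    intro hsub hbase
    have hr : r ∈ reps := hsub r (by simp)
    have hvr : v ≠ r := hv r hr
    simp only [List.foldr_cons, dif_neg hvr]
    by_cases hs : sameBlock P v r
    · obtain ⟨h1, h2⟩ := hyes r hr hs
      constructor
      · simp [MTree.run, if_pos hs, h1]
      · simp only [MTree.queries, if_pos hs, List.length_cons]
        omega
    · obtain ⟨h1, h2⟩ := ih (fun x hx => hsub x (by simp [hx]))
        (fun hno => hbase (by
          intro x hx
          rcases List.mem_cons.1 hx with h | h
          · exact h ▸ hs
          · exact hno x h))
      constructor
      · simp [MTree.run, if_neg hs, h1]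
      · simp only [MTree.queries, if_neg hs, List.length_cons]
        omega

lemma main {n : ℕ} (k : ℕ) (hk : 1 ≤ k) (P : Finpartition (Finset.univ : Finset (Fin n)))
    (hP : P.parts.card = k) :
    ∀ (l : List (Fin n)), l.Nodup → ∀ (f : Fin n → Fin n) (reps : List (Fin n)),
    (∀ x ∈ l, f x = x) →
    (∀ x, x ∉ l → f x ∉ l) →
    (∀ x, x ∉ l → sameBlock P x (f x)) →
    (∀ x y, x ∉ l → y ∉ l → (sameBlock P x y ↔ f x = f y)) →
    reps.Nodup →
    (∀ r, r ∈ reps ↔ r ∉ l ∧ f r = r) →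
    (buildT n k f reps l).run P = P ∧
      (buildT n k f reps l).queries P ≤ qb k reps.length l.length := by
  intro l
  induction l with
  | nil =>
    intro _ f reps _ _ _ h3 _ _
    refine ⟨?_, by simp [buildT, MTree.queries, qb]⟩
    show Finpartition.ofSetoid (Setoid.ker f) = P
    exact leaf_eq P f (fun x y => h3 x y (by simp) (by simp))
  | cons v rest ih =>
    intro hnd f reps h1 h2 hsame h3 hrnd h5
    have hvrest : v ∉ rest := (List.nodup_cons.1 hnd).1
    have hrest : rest.Nodup := (List.nodup_cons.1 hnd).2
    have hfix : ∀ x, x ∉ (v::rest) → f (f x) = f x := fun x hx =>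
      ((h3 x (f x) hx (h2 x hx)).1 (hsame x hx)).symm
    have hfrep : ∀ x, x ∉ (v::rest) → f x ∈ reps := fun x hx =>
      (h5 (f x)).2 ⟨h2 x hx, hfix x hx⟩
    have hrl : ∀ r ∈ reps, r ∉ (v::rest) := fun r hr => ((h5 r).1 hr).1
    have hfr : ∀ r ∈ reps, f r = r := fun r hr => ((h5 r).1 hr).2
    have hvmem : v ∈ (v::rest) := by simp
    have hvr : ∀ r ∈ reps, v ≠ r := fun r hr h => (hrl r hr) (h ▸ hvmem)
    have hinj : Set.InjOn (fun r => P.part r) reps.toFinset := by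
      intro a ha b hb hab
      have hal : a ∈ reps := by simpa using ha
      have hbl : b ∈ reps := by simpa using hb
      have hs : sameBlock P a b := (sameBlock_iff P a b).2 hab
      have := (h3 a b (hrl a hal) (hrl b hbl)).1 hs
      rwa [hfr a hal, hfr b hbl] at this
    have hmk : reps.length ≤ k := by
      have hc := Finset.card_le_card_of_injOn (fun r => P.part r)
        (fun a _ => P.part_mem.2 (Finset.mem_univ a)) hinj
      rw [hP, List.toFinset_card_of_nodup hrnd] at hc
      exact hc
    -- key : transferring invariants after assigning v to block of rep r
    have key : ∀ r ∈ reps, sameBlock P v r →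
        (buildT n k (Function.update f v r) reps rest).run P = P ∧
        (buildT n k (Function.update f v r) reps rest).queries P ≤
          qb k reps.length rest.length := by
      intro r hr hsvr
      have hvne : v ≠ r := hvr r hr
      have hrrest : r ∉ rest := fun hc => (hrl r hr) (by simp [hc])
      apply ih hrest (Function.update f v r) reps
      · intro x hx
        rw [Function.update_of_ne (fun h => hvrest (by rw [← h]; exact hx))]
        exact h1 x (by simp [hx])
      · intro x hx
        by_cases hxv : x = v
        · rw [hxv, Function.update_self]
          exact hrrest
        · rw [Function.update_of_ne hxv]
          have hxl : x ∉ v::rest := by simp [hxv, hx]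
          have := h2 x hxl
          simp only [List.mem_cons, not_or] at this
          exact this.2
      · intro x hx
        by_cases hxv : x = v
        · rw [hxv, Function.update_self]
          exact hsvr
        · rw [Function.update_of_ne hxv]
          exact hsame x (by simp [hxv, hx])
      · intro x y hx hy
        by_cases hxv : x = v <;> by_cases hyv : y = v
        · rw [hxv, hyv, Function.update_self]
          exact iff_of_true (sb_refl P v) rfl
        · rw [hxv]
          have hyl : y ∉ v::rest := by simp [hyv, hy]
          rw [Function.update_self, Function.update_of_ne hyv]
          rw [sameBlock_iff] at hsvr ⊢
          have hy1 := (sameBlock_iff P y (f y)).1 (hsame y hyl)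
          constructor
          · intro hvy
            have hps : P.part r = P.part (f y) := by rw [← hsvr, hvy, hy1]
            have := (h3 r (f y) (hrl r hr) (h2 y hyl)).1 ((sameBlock_iff P r (f y)).2 hps)
            rwa [hfr r hr, hfix y hyl] at this
          · intro hrfy
            rw [hsvr, hrfy, ← hy1]
        · rw [hyv]
          have hxl : x ∉ v::rest := by simp [hxv, hx]
          rw [Function.update_self, Function.update_of_ne hxv]
          rw [sameBlock_iff] at hsvr ⊢
          have hx1 := (sameBlock_iff P x (f x)).1 (hsame x hxl)
          constructor
          · intro hxy
            have hps : P.part (f x) = P.part r := by rw [← hx1, hxy, hsvr]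
            have := (h3 (f x) r (h2 x hxl) (hrl r hr)).1 ((sameBlock_iff P (f x) r).2 hps)
            rwa [hfr r hr, hfix x hxl] at this
          · intro hfxr
            rw [hx1, hfxr, hsvr]
        · rw [Function.update_of_ne hxv, Function.update_of_ne hyv]
          exact h3 x y (by simp [hxv, hx]) (by simp [hyv, hy])
      · exact hrnd
      · intro r'
        constructor
        · intro hr'
          refine ⟨fun hc => (hrl r' hr') (by simp [hc]), ?_⟩
          rw [Function.update_of_ne (hvr r' hr').symm]
          exact hfr r' hr'
        · rintro ⟨hnr, hfr'⟩
          by_cases hrv : r' = v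
          · rw [hrv, Function.update_self] at hfr'
            exact absurd hfr'.symm hvne
          · rw [Function.update_of_ne hrv] at hfr'
            exact (h5 r').2 ⟨by simp [hrv, hnr], hfr'⟩
    by_cases hlen : reps.length = k
    · -- reps.length = k : query against dropLast, default last
      have hne : reps ≠ [] := by
        intro h; rw [h] at hlen; simp at hlen; omega
      have hr0eq : reps.getLastD v = reps.getLast hne := by
        rw [List.getLastD_eq_getLast?, List.getLast?_eq_getLast hne]; rfl
      have hr0 : reps.getLastD v ∈ reps := by
        rw [hr0eq]; exact List.getLast_mem hne
      have hfold := foldr_spec P v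
        (fun r => buildT n k (Function.update f v r) reps rest)
        (buildT n k (Function.update f v (reps.getLastD v)) reps rest)
        (qb k (reps.length + 1) rest.length) reps hvr
        (fun r hr hs => ⟨(key r hr hs).1,
          le_trans (key r hr hs).2 (qb_mono k rest.length reps.length)⟩)
        reps.dropLast
        (fun r hr => List.dropLast_subset reps hr)
        (by
          intro hno
          -- all dropLast answered no; v must be in the block of the last rep
          have himg : reps.toFinset.image (fun r => P.part r) = P.parts := by
            apply Finset.eq_of_subset_of_card_le
            · intro b hb
              simp only [Finset.mem_image] at hb
              obtain ⟨r, _, hrb⟩ := hb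
              exact hrb ▸ P.part_mem.2 (Finset.mem_univ r)
            · rw [Finset.card_image_of_injOn hinj, List.toFinset_card_of_nodup hrnd,
                hlen, hP]
          have hpv : P.part v ∈ reps.toFinset.image (fun r => P.part r) := by
            rw [himg]; exact P.part_mem.2 (Finset.mem_univ v)
          simp only [Finset.mem_image, List.mem_toFinset] at hpv
          obtain ⟨r, hrm, hrp⟩ := hpv
          have hs : sameBlock P v r := (sameBlock_iff P v r).2 hrp.symm
          have hrlast : r = reps.getLastD v := by
            have hdec := List.dropLast_append_getLast hne
            rw [← hdec] at hrm
            rcases List.mem_append.1 hrm with h | h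
            · exact absurd hs (hno r h)
            · rw [hr0eq]; simpa using h
          rw [hrlast] at hs
          exact ⟨(key _ hr0 hs).1,
            le_trans (key _ hr0 hs).2 (qb_mono k rest.length reps.length)⟩)
      simp only [buildT, if_pos hlen]
      refine ⟨hfold.1, le_trans hfold.2 ?_⟩
      have hdl : reps.dropLast.length = reps.length - 1 := List.length_dropLast
      simp only [List.length_cons, qb]
      omega
    · -- reps.length < k : query against all reps, default new block
      have hmlt : reps.length < k := lt_of_le_of_ne hmk hlen
      have hfold := foldr_spec P v
        (fun r => buildT n k (Function.update f v r) reps rest)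
        (buildT n k f (reps ++ [v]) rest)
        (qb k (reps.length + 1) rest.length) reps hvr
        (fun r hr hs => ⟨(key r hr hs).1,
          le_trans (key r hr hs).2 (qb_mono k rest.length reps.length)⟩)
        reps (fun r hr => hr)
        (by
          intro hno
          have hbase := ih hrest f (reps ++ [v])
            (fun x hx => h1 x (by simp [hx]))
            (by
              intro x hx
              by_cases hxv : x = v
              · rw [hxv, h1 v hvmem]
                exact hvrest
              · have hxl : x ∉ v::rest := by simp [hxv, hx]
                have := h2 x hxl
                simp only [List.mem_cons, not_or] at this
                exact this.2)
            (by
              intro x hx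
              by_cases hxv : x = v
              · rw [hxv, h1 v hvmem]
                exact sb_refl P v
              · exact hsame x (by simp [hxv, hx]))
            (by
              intro x y hx hy
              by_cases hxv : x = v <;> by_cases hyv : y = v
              · rw [hxv, hyv]
                exact iff_of_true (sb_refl P v) rfl
              · rw [hxv]
                have hyl : y ∉ v::rest := by simp [hyv, hy]
                refine iff_of_false ?_ ?_
                · intro hs
                  refine hno (f y) (hfrep y hyl) ?_
                  rw [sameBlock_iff] at hs ⊢
                  rw [hs]
                  exact (sameBlock_iff P y (f y)).1 (hsame y hyl)
                · intro hc
                  rw [h1 v hvmem] at hc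
                  exact (h2 y hyl) (by rw [← hc]; exact hvmem)
              · rw [hyv]
                have hxl : x ∉ v::rest := by simp [hxv, hx]
                refine iff_of_false ?_ ?_
                · intro hs
                  refine hno (f x) (hfrep x hxl) ?_
                  rw [sameBlock_iff] at hs ⊢
                  rw [← hs]
                  exact (sameBlock_iff P x (f x)).1 (hsame x hxl)
                · intro hc
                  rw [h1 v hvmem] at hc
                  exact (h2 x hxl) (by rw [hc]; exact hvmem)
              · exact h3 x y (by simp [hxv, hx]) (by simp [hyv, hy]))
            (by
              rw [List.nodup_append]
              exact ⟨hrnd, List.nodup_singleton v,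
                by simpa using fun a ha h => hvr a ha h.symm⟩)
            (by
              intro r
              constructor
              · intro hr
                rcases List.mem_append.1 hr with h | h
                · exact ⟨fun hc => (hrl r h) (by simp [hc]), hfr r h⟩
                · have hrv : r = v := by simpa using h
                  rw [hrv]
                  exact ⟨hvrest, h1 v hvmem⟩
              · rintro ⟨hnr, hfr'⟩
                by_cases hrv : r = v
                · exact List.mem_append_right _ (by simp [hrv])
                · exact List.mem_append_left _ ((h5 r).2 ⟨by simp [hrv, hnr], hfr'⟩))
          rw [List.length_append, List.length_singleton] at hbase
          exact hbase)
      simp only [buildT, if_neg hlen]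
      refine ⟨hfold.1, le_trans hfold.2 ?_⟩
      simp only [List.length_cons, qb]
      omega


/-- For `n ≥ k ≥ 1`, there is a membership-query decision tree on `Fin n` that learns the
family of all partitions of `Fin n` into exactly `k` nonempty blocks and makes at most
`(k-1)·n - k(k-1)/2` queries on every partition in this family. -/
theorem membership_query_upper_bound (n k : ℕ) (hk : 1 ≤ k) (hkn : k ≤ n) :
    ∃ t : MTree n, ∀ P : Finpartition (Finset.univ : Finset (Fin n)),
      P.parts.card = k →
        t.run P = P ∧ (t.queries P : ℤ) ≤ ((k : ℤ) - 1) * n - k * (k - 1) / 2 := by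
  refine ⟨buildT n k id [] (List.finRange n), ?_⟩
  intro P hP
  have h := main k hk P hP (List.finRange n) (List.nodup_finRange n) id []
    (fun x _ => rfl)
    (fun x hx => absurd (List.mem_finRange x) hx)
    (fun x hx => absurd (List.mem_finRange x) hx)
    (fun x y hx _ => absurd (List.mem_finRange x) hx)
    List.nodup_nil
    (fun r => by simp [List.mem_finRange])
  refine ⟨h.1, ?_⟩
  have hq := h.2
  rw [List.length_finRange] at hq
  have hb := qb_bound k hk n 0 (by omega) (by omega)
  norm_num at hb
  have heven : Even ((k:ℤ) * ((k:ℤ) - 1)) := by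
    have := Int.even_mul_succ_self ((k:ℤ) - 1)
    simpa [sub_add_cancel, mul_comm] using this
  have hcancel : (k:ℤ) * ((k:ℤ) - 1) / 2 * 2 = (k:ℤ) * ((k:ℤ) - 1) :=
    Int.ediv_mul_cancel heven.two_dvd
  have hqz : (MTree.queries (buildT n k id [] (List.finRange n)) P : ℤ)
      ≤ (qb k 0 n : ℤ) := by exact_mod_cast hq
  linarith
end

section
/- For all integers n ≥ k ≥ 1, every multiple-membership-query decision tree on vertex set V = Fin n that learns the family of all partitions of V into exactly k nonempty blocks has depth d satisfying 2^d ≥ k^(n−k). -/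
/-- A multiple-membership-query decision tree on vertex set `Fin n` with leaf labels in `L`:
each internal node is labeled by a query `(u, S)` with `u ∉ S`, each leaf by an element of
`L`. -/
inductive MMTree (n : ℕ) (L : Type) : Type where
  | leaf : L → MMTree n L
  | node : (u : Fin n) → (S : Finset (Fin n)) → u ∉ S → MMTree n L → MMTree n L → MMTree n L

/-- The leaf label reached by executing the tree on hidden partition `P`: at a node `(u, S)`
take the yes-branch iff some `v ∈ S` lies in the same block of `P` as `u`. -/
def MMTree.run {n : ℕ} {L : Type} :
    MMTree n L → Finpartition (Finset.univ : Finset (Fin n)) → L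
  | .leaf l, _ => l
  | .node u S _ tyes tno, P =>
      if ∃ v ∈ S, sameBlock P u v then tyes.run P else tno.run P

/-- The number of queries made on hidden partition `P`. -/
def MMTree.queries {n : ℕ} {L : Type} :
    MMTree n L → Finpartition (Finset.univ : Finset (Fin n)) → ℕ
  | .leaf _, _ => 0
  | .node u S _ tyes tno, P =>
      1 + (if ∃ v ∈ S, sameBlock P u v then tyes.queries P else tno.queries P)

/-- The depth of the tree: the maximum length of a root-to-leaf path. -/
def MMTree.depth {n : ℕ} {L : Type} : MMTree n L → ℕ
  | .leaf _ => 0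
  | .node _ _ _ tyes tno => 1 + max tyes.depth tno.depth

open Finset

variable {n k : ℕ}

/-- The classifier function: vertex `i < k` maps to itself; vertex `k + j` maps to `f j`. -/
def gfun (hkn : k ≤ n) (f : Fin (n - k) → Fin k) (i : Fin n) : Fin k :=
  if h : (i : ℕ) < k then ⟨i, h⟩ else f ⟨(i : ℕ) - k, by omega⟩

def kerSetoid (hkn : k ≤ n) (f : Fin (n - k) → Fin k) : Setoid (Fin n) :=
  ⟨fun a b => gfun hkn f a = gfun hkn f b,
   ⟨fun _ => rfl, fun h => h.symm, fun h1 h2 => h1.trans h2⟩⟩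

instance (hkn : k ≤ n) (f : Fin (n - k) → Fin k) : DecidableRel (kerSetoid hkn f).r :=
  fun _ _ => inferInstanceAs (Decidable (_ = _))

def Phi (hkn : k ≤ n) (f : Fin (n - k) → Fin k) :
    Finpartition (Finset.univ : Finset (Fin n)) :=
  Finpartition.ofSetoid (kerSetoid hkn f)


theorem sameBlock_Phi (hkn : k ≤ n) (f : Fin (n - k) → Fin k) (u v : Fin n) :
    sameBlock (Phi hkn f) u v ↔ gfun hkn f u = gfun hkn f v := by
  constructor
  · rintro ⟨b, hb, hu, hv⟩
    simp only [Phi, Finpartition.ofSetoid, Finpartition.ofSetSetoid_parts, Finset.mem_image] at hb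
    obtain ⟨a, -, rfl⟩ := hb
    simp only [Finset.mem_filter, Finset.mem_univ, true_and] at hu hv
    exact hu.symm.trans hv
  · intro h
    refine ⟨(Phi hkn f).part u, (Phi hkn f).part_mem.2 (mem_univ u), ?_, ?_⟩
    · exact (Phi hkn f).mem_part (mem_univ u)
    · exact Finpartition.mem_part_ofSetoid_iff_rel.2 h

theorem gfun_surj (hk : 1 ≤ k) (hkn : k ≤ n) (f : Fin (n - k) → Fin k) :
    Function.Surjective (gfun hkn f) := by
  intro c
  refine ⟨⟨c, by omega⟩, ?_⟩
  simp [gfun, c.isLt]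

theorem Phi_card (hk : 1 ≤ k) (hkn : k ≤ n) (f : Fin (n - k) → Fin k) :
    (Phi hkn f).parts.card = k := by
  have hparts : (Phi hkn f).parts
      = (univ : Finset (Fin k)).image (fun c => univ.filter fun b => gfun hkn f b = c) := by
    simp only [Phi, Finpartition.ofSetoid, Finpartition.ofSetSetoid_parts]
    ext b
    simp only [Finset.mem_image, Finset.mem_univ, true_and]
    constructor
    · rintro ⟨a, rfl⟩
      exact ⟨gfun hkn f a, by ext x; simp [eq_comm]; rfl⟩
    · rintro ⟨c, rfl⟩
      obtain ⟨a, rfl⟩ := gfun_surj hk hkn f c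
      exact ⟨a, by ext x; simp [eq_comm]; rfl⟩
  rw [hparts, Finset.card_image_of_injective _ ?_, Finset.card_univ, Fintype.card_fin]
  intro c d h
  dsimp only at h
  obtain ⟨a, rfl⟩ := gfun_surj hk hkn f c
  have ha : a ∈ filter (fun b => gfun hkn f b = gfun hkn f a) univ := by simp
  rw [h] at ha
  simpa using ha

theorem gfun_low (hkn : k ≤ n) (f : Fin (n - k) → Fin k) (c : Fin k) :
    gfun hkn f ⟨c, by omega⟩ = c := by
  simp [gfun, c.isLt]

theorem gfun_high (hkn : k ≤ n) (f : Fin (n - k) → Fin k) (j : Fin (n - k)) :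
    gfun hkn f ⟨k + j, by omega⟩ = f j := by
  have h1 : ¬ (k + (j : ℕ) < k) := by omega
  simp only [gfun, h1, dif_neg, not_false_iff]
  congr 1
  ext
  simp

theorem Phi_inj (hk : 1 ≤ k) (hkn : k ≤ n) : Function.Injective (Phi (k := k) hkn) := by
  intro f f' h
  funext j
  have h1 : sameBlock (Phi hkn f) ⟨k + j, by omega⟩ ⟨f j, by omega⟩ := by
    rw [sameBlock_Phi, gfun_high, gfun_low]
  rw [h, sameBlock_Phi, gfun_high, gfun_low] at h1
  exact h1.symm

def MMTree.leaves {n : ℕ} {L : Type} : MMTree n L → List L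
  | .leaf l => [l]
  | .node _ _ _ a b => a.leaves ++ b.leaves

theorem MMTree.leaves_length_le {n : ℕ} {L : Type} (t : MMTree n L) :
    t.leaves.length ≤ 2 ^ t.depth := by
  induction t with
  | leaf l => simp [leaves, depth]
  | node u S h a b iha ihb =>
    simp only [leaves, depth, List.length_append]
    calc a.leaves.length + b.leaves.length ≤ 2 ^ a.depth + 2 ^ b.depth :=
          Nat.add_le_add iha ihb
      _ ≤ 2 ^ (max a.depth b.depth) + 2 ^ (max a.depth b.depth) := by gcongr <;> simp
      _ = 2 ^ (1 + max a.depth b.depth) := by ring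

theorem MMTree.run_mem_leaves {n : ℕ} {L : Type} (t : MMTree n L)
    (P : Finpartition (Finset.univ : Finset (Fin n))) : t.run P ∈ t.leaves := by
  induction t with
  | leaf l => simp [run, leaves]
  | node u S h a b iha ihb =>
    simp only [run, leaves, List.mem_append]
    split
    · exact Or.inl iha
    · exact Or.inr ihb

/-- For `n ≥ k ≥ 1`, every multiple-membership-query decision tree on `Fin n` that learns the
family of all partitions of `Fin n` into exactly `k` nonempty blocks has depth `d` with
`2^d ≥ k^(n-k)`. -/
theorem mm_query_depth_lower_bound (n k : ℕ) (hk : 1 ≤ k) (hkn : k ≤ n)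
    (t : MMTree n (Finpartition (Finset.univ : Finset (Fin n))))
    (hlearn : ∀ P : Finpartition (Finset.univ : Finset (Fin n)),
      P.parts.card = k → t.run P = P) :
    k ^ (n - k) ≤ 2 ^ t.depth := by
  classical
  have key : Fintype.card (Fin (n - k) → Fin k) ≤ t.leaves.toFinset.card := by
    apply Finset.card_le_card_of_injOn (fun f => Phi hkn f)
    · intro f _
      simp only [Finset.mem_coe, List.mem_toFinset]
      have := hlearn (Phi hkn f) (Phi_card hk hkn f)
      rw [← this]
      exact t.run_mem_leaves _
    · intro f _ f' _ h
      exact Phi_inj hk hkn h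
  have h1 : k ^ (n - k) = Fintype.card (Fin (n - k) → Fin k) := by
    simp [Fintype.card_fun]
  calc k ^ (n - k) = Fintype.card (Fin (n - k) → Fin k) := h1
    _ ≤ t.leaves.toFinset.card := key
    _ ≤ t.leaves.length := t.leaves.toFinset_card_le
    _ ≤ 2 ^ t.depth := t.leaves_length_le
end

section
/- Let n ≥ 1 and let Ĝ be a simple graph on vertex set V = Fin n with m edges. Then there exists a vertex-neighborhood-detection decision tree on V, with each leaf labeled either 'equal' or 'not equal', whose depth is at most m + n, such that for every simple graph G on V the execution path determined by G ends at a leaf labeled 'equal' if and only if G = Ĝ. -/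
/-- A vertex-neighborhood-detection decision tree on vertex set `Fin n` with leaf labels in
`L`: each internal node is labeled by a query `(u, S)` with `u ∉ S`, each leaf by an element
of `L`. -/
inductive NTree (n : ℕ) (L : Type u) : Type u where
  | leaf : L → NTree n L
  | node : (u : Fin n) → (S : Finset (Fin n)) → u ∉ S → NTree n L → NTree n L → NTree n L

open Classical in
/-- The leaf label reached by executing the tree on hidden graph `G`: at a node `(u, S)` take
the yes-branch iff some `v ∈ S` is adjacent to `u` in `G`. -/
noncomputable def NTree.run {n : ℕ} {L : Type u} :
    NTree n L → SimpleGraph (Fin n) → L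
  | .leaf l, _ => l
  | .node u S _ tyes tno, G =>
      if ∃ v ∈ S, G.Adj u v then tyes.run G else tno.run G

open Classical in
/-- The number of queries made on hidden graph `G`. -/
noncomputable def NTree.queries {n : ℕ} {L : Type u} :
    NTree n L → SimpleGraph (Fin n) → ℕ
  | .leaf _, _ => 0
  | .node u S _ tyes tno, G =>
      1 + (if ∃ v ∈ S, G.Adj u v then tyes.queries G else tno.queries G)

/-- The depth of the tree: the maximum length of a root-to-leaf path. -/
def NTree.depth {n : ℕ} {L : Type u} : NTree n L → ℕ
  | .leaf _ => 0
  | .node _ _ _ tyes tno => 1 + max tyes.depth tno.depth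

namespace NTreeAux

open Classical

/-- Chain tree from a list of checks `(u, S, expected)`. -/
noncomputable def chain {n : ℕ} : List (Fin n × Finset (Fin n) × Bool) → NTree n Bool
  | [] => .leaf true
  | (u, S, b) :: rest =>
    if h : u ∉ S then
      if b then .node u S h (chain rest) (.leaf false)
      else .node u S h (.leaf false) (chain rest)
    else .leaf false

lemma chain_depth {n : ℕ} (l : List (Fin n × Finset (Fin n) × Bool)) :
    (chain l).depth ≤ l.length := by
  induction l with
  | nil => simp [chain, NTree.depth]
  | cons c rest ih =>
    obtain ⟨u, S, b⟩ := c
    simp only [chain]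
    split
    · split <;> simp [NTree.depth] <;> omega
    · simp [NTree.depth]

lemma chain_run {n : ℕ} (l : List (Fin n × Finset (Fin n) × Bool))
    (hl : ∀ c ∈ l, c.1 ∉ c.2.1) (G : SimpleGraph (Fin n)) :
    (chain l).run G = true ↔ ∀ c ∈ l, ((∃ v ∈ c.2.1, G.Adj c.1 v) ↔ c.2.2 = true) := by
  induction l with
  | nil => simp [chain, NTree.run]
  | cons c rest ih =>
    obtain ⟨u, S, b⟩ := c
    have h : u ∉ S := hl _ (List.mem_cons_self ..)
    have ih' := ih (fun c hc => hl c (List.mem_cons_of_mem _ hc))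
    simp only [chain, dif_pos h]
    by_cases hq : ∃ v ∈ S, G.Adj u v
    · cases b <;> simp [NTree.run, hq, ih']
    · cases b <;> simp [NTree.run, hq, ih']

variable {n : ℕ} (Ghat : SimpleGraph (Fin n))

noncomputable def A (u : Fin n) : Finset (Fin n) :=
  Finset.univ.filter (fun v => u < v ∧ Ghat.Adj u v)

noncomputable def S0 (u : Fin n) : Finset (Fin n) :=
  Finset.univ.filter (fun v => u < v ∧ ¬ Ghat.Adj u v)

noncomputable def checks : List (Fin n × Finset (Fin n) × Bool) :=
  (List.finRange n).flatMap fun u =>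
    (u, S0 Ghat u, false) :: (A Ghat u).toList.map fun v => (u, ({v} : Finset (Fin n)), true)

lemma checks_ok : ∀ c ∈ checks Ghat, c.1 ∉ c.2.1 := by
  intro c hc
  simp only [checks, List.mem_flatMap, List.mem_cons, List.mem_map] at hc
  obtain ⟨u, -, hc | ⟨v, hv, rfl⟩⟩ := hc
  · subst hc; simp [S0]
  · rw [Finset.mem_toList] at hv
    simp only [A, Finset.mem_filter] at hv
    simp only [Finset.mem_singleton]
    exact fun h => absurd (h ▸ hv.2.1) (lt_irrefl u)

lemma checks_length : (checks Ghat).length = n + ∑ u, (A Ghat u).card := by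
  simp only [checks, List.length_flatMap, Function.comp, List.length_cons,
    List.length_map, Finset.length_toList]
  rw [← Fin.sum_univ_def]
  simp [Finset.sum_add_distrib, add_comm]

lemma sum_A_card : ∑ u, (A Ghat u).card = Ghat.edgeFinset.card := by
  rw [← Finset.card_sigma]
  refine Finset.card_bij (fun (p : Σ _ : Fin n, Fin n) _ => Sym2.mk p.1 p.2) ?_ ?_ ?_
  · rintro ⟨u, v⟩ hp
    simp only [Finset.mem_sigma, A, Finset.mem_filter, Finset.mem_univ, true_and] at hp
    simpa [SimpleGraph.mem_edgeFinset] using hp.2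
  · rintro ⟨u, v⟩ hp ⟨u', v'⟩ hp' he
    simp only [Finset.mem_sigma, A, Finset.mem_filter, Finset.mem_univ, true_and] at hp hp'
    rw [Sym2.eq_iff] at he
    rcases he with he | he
    · simpa using he
    · simp only [Prod.swap_prod_mk, Prod.mk.injEq] at he
      have h' := hp'.1
      rw [← he.1, ← he.2] at h'
      exact absurd hp.1 h'.asymm
  · intro e he
    induction e with
    | _ a b =>
      rw [SimpleGraph.mem_edgeFinset, SimpleGraph.mem_edgeSet] at he
      rcases lt_trichotomy a b with hab | hab | hab
      · exact ⟨⟨a, b⟩, by simp [A, hab, he], rfl⟩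
      · exact absurd (hab ▸ he) (Ghat.irrefl)
      · exact ⟨⟨b, a⟩, by simp [A, hab, he.symm], Sym2.eq_swap⟩

end NTreeAux

open NTreeAux in
/-- Graph verification with vertex-neighborhood-detection queries: for every known graph `Ĝ`
on `Fin n` with `m` edges there is a decision tree of depth at most `m + n`, with Boolean
leaves, that on every hidden graph `G` outputs `true` iff `G = Ĝ`. -/
theorem graph_verification_upper_bound (n : ℕ) (hn : 1 ≤ n)
    (Ghat : SimpleGraph (Fin n)) (m : ℕ) (hm : Ghat.edgeSet.ncard = m) :
    ∃ t : NTree n Bool, t.depth ≤ m + n ∧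
      ∀ G : SimpleGraph (Fin n), (t.run G = true ↔ G = Ghat) := by
  classical
  refine ⟨chain (checks Ghat), ?_, ?_⟩
  · calc (chain (checks Ghat)).depth ≤ (checks Ghat).length := chain_depth _
    _ = n + ∑ u, (A Ghat u).card := checks_length Ghat
    _ = n + Ghat.edgeFinset.card := by rw [sum_A_card]
    _ = m + n := by
        rw [← hm, ← SimpleGraph.coe_edgeFinset, Set.ncard_coe_finset]
        omega
  · intro G
    rw [chain_run _ (checks_ok Ghat) G]
    constructor
    · intro hall
      have key : ∀ u v : Fin n, u < v → (G.Adj u v ↔ Ghat.Adj u v) := by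
        intro u v huv
        by_cases ha : Ghat.Adj u v
        · have hmem : ((u, ({v} : Finset (Fin n)), true) : Fin n × Finset (Fin n) × Bool)
              ∈ checks Ghat := by
            simp only [checks, List.mem_flatMap]
            exact ⟨u, List.mem_finRange u, by
              simp only [List.mem_cons, List.mem_map, Finset.mem_toList]
              exact Or.inr ⟨v, by simp [A, huv, ha], rfl⟩⟩
          have hG : G.Adj u v := by simpa using hall _ hmem
          exact ⟨fun _ => ha, fun _ => hG⟩
        · have hmem : ((u, S0 Ghat u, false) : Fin n × Finset (Fin n) × Bool)
              ∈ checks Ghat := by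
            simp only [checks, List.mem_flatMap]
            exact ⟨u, List.mem_finRange u, List.mem_cons_self ..⟩
          have := hall _ hmem
          simp only [Bool.false_eq_true, iff_false, not_exists] at this
          have hnG : ¬ G.Adj u v := by
            have h' := this v
            simp only [S0, Finset.mem_filter, Finset.mem_univ, true_and] at h'
            exact fun hG => h' ⟨⟨huv, ha⟩, hG⟩
          exact ⟨fun h => absurd h hnG, fun h => absurd h ha⟩
      ext u v
      rcases lt_trichotomy u v with h | h | h
      · exact key u v h
      · subst h; simp
      · rw [G.adj_comm, Ghat.adj_comm]; exact key v u h
    · rintro rfl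
      intro c hc
      simp only [checks, List.mem_flatMap, List.mem_cons, List.mem_map] at hc
      obtain ⟨u, -, hc | ⟨v, hv, rfl⟩⟩ := hc
      · subst hc
        simp only [Bool.false_eq_true, iff_false, not_exists]
        intro v hv
        simp only [S0, Finset.mem_filter, Finset.mem_univ, true_and] at hv
        exact hv.1.2 hv.2
      · rw [Finset.mem_toList] at hv
        simp only [A, Finset.mem_filter, Finset.mem_univ, true_and] at hv
        simpa using hv.2
end

section
/- For every n ≥ 2 there exists a vertex-neighborhood-detection decision tree on vertex set V = Fin n, with leaves labeled by simple graphs on V, such that for every simple graph G on V the execution path determined by G ends at a leaf labeled G, and the length of this path is at most n + 8·|E(G)|·(⌈log₂ n⌉ + 1). -/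
namespace GLUB

open Classical

variable {n : ℕ} {L : Type u}

/-- Binary search: assuming some vertex in `l` is a neighbor of `u`, find one and pass it
to the continuation `k`. -/
noncomputable def findOne (u : Fin n) (k : Fin n → NTree n L) :
    ℕ → (l : List (Fin n)) → u ∉ l → NTree n L
  | 0, l, _ => k (l.headD u)
  | fuel+1, l, hu =>
    if l.length ≤ 1 then k (l.headD u)
    else
      NTree.node u (l.take (l.length / 2)).toFinset
        (by simp only [List.mem_toFinset]; exact fun h => hu (List.mem_of_mem_take h))
        (findOne u k fuel (l.take (l.length / 2)) (fun h => hu (List.mem_of_mem_take h)))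
        (findOne u k fuel (l.drop (l.length / 2)) (fun h => hu (List.mem_of_mem_drop h)))

lemma findOne_spec (G : SimpleGraph (Fin n)) (u : Fin n) (k : Fin n → NTree n L) :
    ∀ fuel (l : List (Fin n)) (hu : u ∉ l), l.length ≤ fuel → (∃ v ∈ l, G.Adj u v) →
    ∃ v ∈ l, G.Adj u v ∧ (findOne u k fuel l hu).run G = (k v).run G ∧
      (findOne u k fuel l hu).queries G ≤ Nat.clog 2 l.length + (k v).queries G := by
  intro fuel
  induction fuel with
  | zero =>
    intro l hu hlen hex
    rw [List.length_eq_zero_iff.mp (Nat.le_zero.mp hlen)] at hex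
    simp at hex
  | succ fuel ih =>
    intro l hu hlen hex
    by_cases h1 : l.length ≤ 1
    · obtain ⟨v, hv, hadj⟩ := hex
      have hne : l ≠ [] := by rintro rfl; simp at hv
      have : l = [v] := by
        match l, hv with
        | [a], hv => simp at hv; subst hv; rfl
        | a :: b :: t, _ => simp at h1
      subst this
      refine ⟨v, by simp, by simpa using hadj, ?_, ?_⟩ <;>
        simp [findOne, h1, NTree.run, NTree.queries]
    · have hlen2 : 2 ≤ l.length := by omega
      set m := l.length with hm
      set l1 := l.take (m / 2) with hl1
      set l2 := l.drop (m / 2) with hl2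
      have hlen1 : l1.length = m / 2 := by
        simp [hl1, hm]; omega
      have hlenn2 : l2.length = m - m / 2 := by simp [hl2, hm]
      have hfind : findOne u k (fuel+1) l hu =
          NTree.node u l1.toFinset
            (by simp only [List.mem_toFinset]; exact fun h => hu (List.mem_of_mem_take h))
            (findOne u k fuel l1 (fun h => hu (List.mem_of_mem_take h)))
            (findOne u k fuel l2 (fun h => hu (List.mem_of_mem_drop h))) := by
        rw [findOne, if_neg h1]
      have hclog : Nat.clog 2 ((m+1)/2) + 1 = Nat.clog 2 m := by
        have h21 : m + 2 - 1 = m + 1 := by omega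
        rw [Nat.clog_of_two_le one_lt_two hlen2, h21]
      by_cases hyes : ∃ v ∈ l1.toFinset, G.Adj u v
      · obtain ⟨v, hv, hadj, hrun, hq⟩ := ih l1 (fun h => hu (List.mem_of_mem_take h))
          (by omega) (by simpa using hyes)
        refine ⟨v, List.mem_of_mem_take hv, hadj, ?_, ?_⟩
        · rw [hfind]; simp only [NTree.run]; rw [if_pos hyes]; exact hrun
        · rw [hfind]; simp only [NTree.queries]; rw [if_pos hyes]
          have : Nat.clog 2 l1.length ≤ Nat.clog 2 ((m+1)/2) :=
            Nat.clog_mono_right 2 (by omega)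
          omega
      · have hex2 : ∃ v ∈ l2, G.Adj u v := by
          obtain ⟨v, hv, hadj⟩ := hex
          refine ⟨v, ?_, hadj⟩
          have : v ∈ l1 ++ l2 := by rw [hl1, hl2, List.take_append_drop]; exact hv
          rcases List.mem_append.mp this with h | h
          · exact absurd ⟨v, List.mem_toFinset.mpr h, hadj⟩ hyes
          · exact h
        obtain ⟨v, hv, hadj, hrun, hq⟩ := ih l2 (fun h => hu (List.mem_of_mem_drop h))
          (by omega) hex2
        refine ⟨v, List.mem_of_mem_drop hv, hadj, ?_, ?_⟩
        · rw [hfind]; simp only [NTree.run]; rw [if_neg hyes]; exact hrun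
        · rw [hfind]; simp only [NTree.queries]; rw [if_neg hyes]
          have : Nat.clog 2 l2.length ≤ Nat.clog 2 ((m+1)/2) :=
            Nat.clog_mono_right 2 (by omega)
          omega

/-- Find all neighbors of `u` inside `l`, accumulate them into `acc`, pass to `k`. -/
noncomputable def findAll (u : Fin n) (k : List (Fin n) → NTree n L) :
    ℕ → (l : List (Fin n)) → List (Fin n) → u ∉ l → NTree n L
  | 0, _, acc, _ => k acc
  | fuel+1, l, acc, hu =>
    if l = [] then k acc
    else
      NTree.node u l.toFinset (by simpa using hu)
        (findOne u (fun v => findAll u k fuel (l.erase v) (v :: acc)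
            (fun hm => hu (List.mem_of_mem_erase hm))) l.length l hu)
        (k acc)

lemma findAll_spec (G : SimpleGraph (Fin n)) (u : Fin n) (k : List (Fin n) → NTree n L) :
    ∀ fuel (l : List (Fin n)) (acc : List (Fin n)) (hu : u ∉ l), l.Nodup →
      l.length ≤ fuel → l.length ≤ n →
    ∃ r : List (Fin n),
      (∀ v, v ∈ r ↔ v ∈ acc ∨ (v ∈ l ∧ G.Adj u v)) ∧
      (findAll u k fuel l acc hu).run G = (k r).run G ∧
      (findAll u k fuel l acc hu).queries G ≤
        1 + (l.toFinset.filter (G.Adj u)).card * (Nat.clog 2 n + 1) + (k r).queries G := by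
  intro fuel
  induction fuel with
  | zero =>
    intro l acc hu hnd hlen hln
    have hl : l = [] := List.length_eq_zero_iff.mp (Nat.le_zero.mp hlen)
    subst hl
    exact ⟨acc, by simp, rfl, by simp [findAll]⟩
  | succ fuel ih =>
    intro l acc hu hnd hlen hln
    by_cases hl : l = []
    · subst hl
      exact ⟨acc, by simp, by simp [findAll], by simp [findAll]⟩
    · have hfind : findAll u k (fuel+1) l acc hu =
          NTree.node u l.toFinset (by simpa using hu)
            (findOne u (fun v => findAll u k fuel (l.erase v) (v :: acc)
                (fun hm => hu (List.mem_of_mem_erase hm))) l.length l hu)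
            (k acc) := by
        rw [findAll, if_neg hl]
      by_cases hyes : ∃ v ∈ l.toFinset, G.Adj u v
      · obtain ⟨v, hv, hadj, hrun1, hq1⟩ := findOne_spec G u _ l.length l hu le_rfl
          (by simpa using hyes)
        have hlenerase : (l.erase v).length = l.length - 1 := by
          rw [List.length_erase_of_mem hv]
        obtain ⟨r, hr, hrun2, hq2⟩ := ih (l.erase v) (v :: acc)
          (fun hm => hu (List.mem_of_mem_erase hm)) (hnd.erase v)
          (by omega) (by omega)
        refine ⟨r, ?_, ?_, ?_⟩
        · intro w
          rw [hr w]
          constructor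
          · rintro (hw | ⟨hw, hadjw⟩)
            · rcases List.mem_cons.mp hw with rfl | hw
              · exact Or.inr ⟨hv, hadj⟩
              · exact Or.inl hw
            · exact Or.inr ⟨List.mem_of_mem_erase hw, hadjw⟩
          · rintro (hw | ⟨hw, hadjw⟩)
            · exact Or.inl (List.mem_cons_of_mem _ hw)
            · by_cases hwv : w = v
              · exact Or.inl (by simp [hwv])
              · exact Or.inr ⟨(hnd.mem_erase_iff).mpr ⟨hwv, hw⟩, hadjw⟩
        · rw [hfind]; simp only [NTree.run]; rw [if_pos hyes]; exact hrun1.trans hrun2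
        · rw [hfind]; simp only [NTree.queries]; rw [if_pos hyes]
          have herasefin : (l.erase v).toFinset = l.toFinset.erase v := by
            ext w; simp [hnd.mem_erase_iff, Finset.mem_erase, and_comm]
          have hcard : ((l.erase v).toFinset.filter (G.Adj u)).card
              = (l.toFinset.filter (G.Adj u)).card - 1 := by
            rw [herasefin, Finset.filter_erase, Finset.card_erase_of_mem
              (Finset.mem_filter.mpr ⟨List.mem_toFinset.mpr hv, hadj⟩)]
          have hpos : 1 ≤ (l.toFinset.filter (G.Adj u)).card :=
            Finset.card_pos.mpr ⟨v, Finset.mem_filter.mpr ⟨List.mem_toFinset.mpr hv, hadj⟩⟩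
          have hclogle : Nat.clog 2 l.length ≤ Nat.clog 2 n := Nat.clog_mono_right 2 hln
          have h2 := hq2
          rw [hcard] at h2
          have hmul : (l.toFinset.filter (G.Adj u)).card * (Nat.clog 2 n + 1)
              = ((l.toFinset.filter (G.Adj u)).card - 1) * (Nat.clog 2 n + 1)
                + (Nat.clog 2 n + 1) := by
            conv_lhs => rw [← Nat.succ_pred_eq_of_pos hpos]
            rw [Nat.succ_mul]
            rfl
          omega
      · refine ⟨acc, fun v => ⟨Or.inl, ?_⟩, ?_, ?_⟩
        · rintro (h | ⟨hv, hadj⟩)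
          · exact h
          · exact absurd ⟨v, List.mem_toFinset.mpr hv, hadj⟩ hyes
        · rw [hfind]; simp only [NTree.run]; rw [if_neg hyes]
        · rw [hfind]; simp only [NTree.queries]; rw [if_neg hyes]; omega

/-- Process vertices of `us` one by one, finding for each `u` all its neighbors above it. -/
noncomputable def learn : List (Fin n) → List (Fin n × Fin n) → NTree n (SimpleGraph (Fin n))
  | [], acc => .leaf (SimpleGraph.fromRel (fun a b => (a, b) ∈ acc))
  | u :: rest, acc =>
      findAll u (fun r => learn rest (r.map (fun v => (u, v)) ++ acc)) n
        ((List.finRange n).filter (fun v => decide (u < v))) []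
        (by simp)

lemma learn_spec (G : SimpleGraph (Fin n)) :
    ∀ us (acc : List (Fin n × Fin n)),
      (∀ p ∈ acc, G.Adj p.1 p.2) →
      (∀ a b : Fin n, G.Adj a b → a < b → a ∈ us ∨ (a, b) ∈ acc) →
      (learn us acc).run G = G ∧
      (learn us acc).queries G ≤ us.length
        + (us.map (fun u => G.degree u)).sum * (Nat.clog 2 n + 1) := by
  intro us
  induction us with
  | nil =>
    intro acc hsound hcover
    constructor
    · show SimpleGraph.fromRel _ = G
      ext a b
      rw [SimpleGraph.fromRel_adj]
      constructor
      · rintro ⟨hne, h | h⟩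
        · exact hsound _ h
        · exact (hsound _ h).symm
      · intro hadj
        refine ⟨G.ne_of_adj hadj, ?_⟩
        rcases lt_or_gt_of_ne (G.ne_of_adj hadj) with hlt | hlt
        · rcases hcover a b hadj hlt with h | h
          · simp at h
          · exact Or.inl h
        · rcases hcover b a hadj.symm hlt with h | h
          · simp at h
          · exact Or.inr h
    · simp [learn, NTree.queries]
  | cons u rest ih =>
    intro acc hsound hcover
    have hnd : ((List.finRange n).filter (fun v => decide (u < v))).Nodup :=
      (List.nodup_finRange n).filter _
    have hln : ((List.finRange n).filter (fun v => decide (u < v))).length ≤ n := by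
      calc _ ≤ (List.finRange n).length := List.length_filter_le _ _
        _ = n := List.length_finRange
    obtain ⟨r, hr, hrun, hq⟩ := findAll_spec G u
      (fun r => learn rest (r.map (fun v => (u, v)) ++ acc)) n
      ((List.finRange n).filter (fun v => decide (u < v))) [] (by simp) hnd hln hln
    have hrmem : ∀ v, v ∈ r ↔ u < v ∧ G.Adj u v := by
      intro v
      rw [hr v]
      simp [List.mem_filter]
    have hsound' : ∀ p ∈ r.map (fun v => (u, v)) ++ acc, G.Adj p.1 p.2 := by
      intro p hp
      rcases List.mem_append.mp hp with hp | hp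
      · obtain ⟨v, hv, rfl⟩ := List.mem_map.mp hp
        exact ((hrmem v).mp hv).2
      · exact hsound p hp
    have hcover' : ∀ a b : Fin n, G.Adj a b → a < b →
        a ∈ rest ∨ (a, b) ∈ r.map (fun v => (u, v)) ++ acc := by
      intro a b hadj hlt
      rcases hcover a b hadj hlt with h | h
      · rcases List.mem_cons.mp h with rfl | h
        · exact Or.inr (List.mem_append.mpr (Or.inl
            (List.mem_map.mpr ⟨b, (hrmem b).mpr ⟨hlt, hadj⟩, rfl⟩)))
        · exact Or.inl h
      · exact Or.inr (List.mem_append.mpr (Or.inr h))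
    obtain ⟨ihrun, ihq⟩ := ih (r.map (fun v => (u, v)) ++ acc) hsound' hcover'
    constructor
    · show (findAll u _ n _ [] _).run G = G
      rw [hrun]; exact ihrun
    · show (findAll u _ n _ [] _).queries G ≤ _
      have hdeg : ((((List.finRange n).filter (fun v => decide (u < v))).toFinset).filter
          (G.Adj u)).card ≤ G.degree u := by
        rw [← SimpleGraph.card_neighborFinset_eq_degree]
        apply Finset.card_le_card
        intro v hv
        rw [SimpleGraph.mem_neighborFinset]
        exact (Finset.mem_filter.mp hv).2
      calc (findAll u _ n _ [] _).queries G
          ≤ 1 + ((((List.finRange n).filter (fun v => decide (u < v))).toFinset).filter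
              (G.Adj u)).card * (Nat.clog 2 n + 1)
            + (learn rest (r.map (fun v => (u, v)) ++ acc)).queries G := hq
        _ ≤ 1 + G.degree u * (Nat.clog 2 n + 1)
            + (rest.length + (rest.map (fun u => G.degree u)).sum * (Nat.clog 2 n + 1)) := by
            have := Nat.mul_le_mul_right (Nat.clog 2 n + 1) hdeg
            omega
        _ ≤ _ := by
            simp only [List.length_cons, List.map_cons, List.sum_cons]
            ring_nf
            omega

end GLUB


/-- Graph learning with vertex-neighborhood-detection queries: for every `n ≥ 2` there is a
decision tree on `Fin n`, with leaves labeled by graphs, that on every hidden graph `G`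
outputs `G` while making at most `n + 8·|E(G)|·(⌈log₂ n⌉ + 1)` queries. -/
theorem graph_learning_upper_bound (n : ℕ) (hn : 2 ≤ n) :
    ∃ t : NTree n (SimpleGraph (Fin n)), ∀ G : SimpleGraph (Fin n),
      t.run G = G ∧ t.queries G ≤ n + 8 * G.edgeSet.ncard * (Nat.clog 2 n + 1) := by
  classical
  refine ⟨GLUB.learn (List.finRange n) [], fun G => ?_⟩
  obtain ⟨hrun, hq⟩ := GLUB.learn_spec G (List.finRange n) [] (by simp)
    (fun a b _ _ => Or.inl (List.mem_finRange a))
  refine ⟨hrun, ?_⟩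
  have hsum : ((List.finRange n).map (fun u => G.degree u)).sum = 2 * G.edgeFinset.card := by
    rw [← Fin.sum_univ_def]
    exact SimpleGraph.sum_degrees_eq_twice_card_edges G
  have hcard : G.edgeSet.ncard = G.edgeFinset.card := by
    rw [← SimpleGraph.coe_edgeFinset, Set.ncard_coe_finset]
  rw [hcard]
  rw [hsum, List.length_finRange] at hq
  nlinarith [hq]
end
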